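/- If p is a probability vector such that the entropy h(μ_p) = −Σ_n p_n log p_n is infinite, then the pushforward Bernoulli measure satisfies dim μ_p ≤ 1/2. -/

import Mathlib

open MeasureTheory Filter Set
open scoped ENNReal NNReal Topology

instance : MeasurableSpace ℕ+ := ⊤

/-- The Gauss map `T x = 1/x - ⌊1/x⌋` (with `T 0 = 0`). -/
noncomputable def gaussMap (x : ℝ) : ℝ := if x = 0 then 0 else Int.fract x⁻¹

/-- Finite continued fraction approximants: `cfApprox n a` is the value of the
continued fraction `1/(a 0 + 1/(a 1 + ⋯))` truncated after `n` levels. -/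
noncomputable def cfApprox : ℕ → (ℕ → ℕ+) → ℝ
  | 0, _ => 0
  | n + 1, a => (((a 0 : ℕ) : ℝ) + cfApprox n (fun k => a (k + 1)))⁻¹

/-- The continued fraction coding map `Π : ℕ^ℕ → [0,1] ∖ ℚ`. -/
noncomputable def cfVal (a : ℕ → ℕ+) : ℝ := limUnder atTop (fun n => cfApprox n a)

/-- `p` is a countable probability vector `(p_n)_{n ≥ 1}`. -/
def IsProbVec (p : ℕ+ → ℝ) : Prop := (∀ n, 0 ≤ p n) ∧ HasSum p 1

/-- `m` is the Bernoulli product measure on `ℕ^ℕ` with weights `p`: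
it assigns to each cylinder the product of the weights of its digits. -/
def IsBernoulli (p : ℕ+ → ℝ) (m : Measure (ℕ → ℕ+)) : Prop :=
  ∀ (n : ℕ) (i : ℕ → ℕ+),
    m {a | ∀ k < n, a k = i k} = ENNReal.ofReal (∏ k ∈ Finset.range n, p (i k))


/-- Hausdorff dimension of a measure: `inf { dim_H A : μ A = 1 }`. -/
noncomputable def dimMeasure (μ : Measure ℝ) : ℝ≥0∞ :=
  ⨅ (A : Set ℝ) (_ : μ A = 1), dimH A

namespace CFAux

instance : MeasurableSingletonClass ℕ+ := ⟨fun _ => trivial⟩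

/-- one step map -/
noncomputable def g (i : ℕ+) (x : ℝ) : ℝ := (((i : ℕ) : ℝ) + x)⁻¹

noncomputable def itApp : ℕ → (ℕ → ℕ+) → ℝ → ℝ
  | 0, _, x => x
  | n + 1, a, x => g (a 0) (itApp n (fun k => a (k + 1)) x)

lemma one_le_coe (i : ℕ+) : (1 : ℝ) ≤ ((i : ℕ) : ℝ) := by
  exact_mod_cast Nat.one_le_iff_ne_zero.2 i.pos.ne'

lemma g_mem {i : ℕ+} {x : ℝ} (hx : x ∈ Icc (0:ℝ) 1) : g i x ∈ Icc (0:ℝ) 1 := by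
  have h1 : (1:ℝ) ≤ ((i:ℕ):ℝ) := one_le_coe i
  have hpos : (0:ℝ) < ((i:ℕ):ℝ) + x := by linarith [hx.1]
  have h2 : (1:ℝ) ≤ ((i:ℕ):ℝ) + x := by linarith [hx.1]
  constructor
  · simp only [g]; positivity
  · simp only [g]
    rw [inv_le_one_iff₀]; right; exact h2

lemma itApp_mem {n : ℕ} {a : ℕ → ℕ+} {x : ℝ} (hx : x ∈ Icc (0:ℝ) 1) :
    itApp n a x ∈ Icc (0:ℝ) 1 := by
  induction n generalizing a with
  | zero => exact hx
  | succ n ih => exact g_mem (ih (a := fun k => a (k+1)))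

lemma cfApprox_eq (n : ℕ) (a : ℕ → ℕ+) : cfApprox n a = itApp n a 0 := by
  induction n generalizing a with
  | zero => rfl
  | succ n ih => simp only [cfApprox, itApp, ih, g]

lemma itApp_add (n m : ℕ) (a : ℕ → ℕ+) (x : ℝ) :
    itApp (n + m) a x = itApp n a (itApp m (fun k => a (k + n)) x) := by
  induction n generalizing a with
  | zero => simp [itApp]
  | succ n ih =>
    have e : n + 1 + m = (n + m) + 1 := by omega
    rw [e]
    show g (a 0) (itApp (n + m) (fun k => a (k + 1)) x)
        = g (a 0) (itApp n (fun k => a (k + 1)) (itApp m (fun k => a (k + (n + 1))) x))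
    rw [ih]
    rfl

lemma g_sub (i : ℕ+) {x y : ℝ} (hx : 0 ≤ x) (hy : 0 ≤ y) :
    g i x - g i y = (y - x) / ((((i:ℕ):ℝ) + x) * (((i:ℕ):ℝ) + y)) := by
  have h1 : (1:ℝ) ≤ ((i:ℕ):ℝ) := one_le_coe i
  have hx' : (0:ℝ) < ((i:ℕ):ℝ) + x := by linarith
  have hy' : (0:ℝ) < ((i:ℕ):ℝ) + y := by linarith
  have hxne : (((i:ℕ):ℝ) + x) ≠ 0 := hx'.ne'
  have hyne : (((i:ℕ):ℝ) + y) ≠ 0 := hy'.ne'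
  simp only [g]
  rw [inv_sub_inv hxne hyne]
  congr 1
  ring

lemma abs_g_sub_le (i : ℕ+) {x y : ℝ} (hx : 0 ≤ x) (hy : 0 ≤ y) :
    |g i x - g i y| ≤ (((i:ℕ):ℝ))⁻¹ ^ 2 * |x - y| := by
  have h1 : (1:ℝ) ≤ ((i:ℕ):ℝ) := one_le_coe i
  have hxp : (0:ℝ) < ((i:ℕ):ℝ) + x := by linarith
  have hyp : (0:ℝ) < ((i:ℕ):ℝ) + y := by linarith
  have habs : |(((i:ℕ):ℝ) + x) * (((i:ℕ):ℝ) + y)| = (((i:ℕ):ℝ) + x) * (((i:ℕ):ℝ) + y) :=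
    abs_of_pos (by positivity)
  rw [g_sub i hx hy, abs_div, abs_sub_comm y x, habs]
  have hrw : (((i:ℕ):ℝ))⁻¹ ^ 2 * |x - y| = |x - y| / (((i:ℕ):ℝ) * ((i:ℕ):ℝ)) := by
    rw [sq, div_eq_mul_inv, mul_inv]; ring
  rw [hrw]
  apply div_le_div_of_nonneg_left (abs_nonneg _) (by positivity)
  nlinarith

/-- Lipschitz bound A : product of digit⁻². -/
lemma lipA (n : ℕ) (a : ℕ → ℕ+) {x y : ℝ} (hx : x ∈ Icc (0:ℝ) 1) (hy : y ∈ Icc (0:ℝ) 1) :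
    |itApp n a x - itApp n a y| ≤ (∏ k ∈ Finset.range n, (((a k : ℕ):ℝ))⁻¹ ^ 2) * |x - y| := by
  induction n generalizing a with
  | zero => simp [itApp]
  | succ n ih =>
    have hu := itApp_mem (n := n) (a := fun k => a (k+1)) hx
    have hv := itApp_mem (n := n) (a := fun k => a (k+1)) hy
    calc |itApp (n+1) a x - itApp (n+1) a y|
        ≤ (((a 0 : ℕ):ℝ))⁻¹ ^ 2 * |itApp n (fun k => a (k+1)) x - itApp n (fun k => a (k+1)) y| :=
          abs_g_sub_le _ hu.1 hv.1
      _ ≤ (((a 0 : ℕ):ℝ))⁻¹ ^ 2 * ((∏ k ∈ Finset.range n, (((a (k+1) : ℕ):ℝ))⁻¹ ^ 2) * |x - y|) := by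
          apply mul_le_mul_of_nonneg_left (ih _) (by positivity)
      _ = (∏ k ∈ Finset.range (n+1), (((a k : ℕ):ℝ))⁻¹ ^ 2) * |x - y| := by
          rw [Finset.prod_range_succ']; ring

/-- Lipschitz bound B : uniform geometric contraction. -/
lemma lipB (n : ℕ) (a : ℕ → ℕ+) {x y : ℝ} (hx : x ∈ Icc (0:ℝ) 1) (hy : y ∈ Icc (0:ℝ) 1) :
    |itApp n a x - itApp n a y| ≤ 2 * (2:ℝ)⁻¹ ^ n * |x - y| := by
  induction n using Nat.twoStepInduction generalizing a with
  | zero => simpa [itApp] using (by linarith [abs_nonneg (x - y)] : |x - y| ≤ 2 * |x - y|)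
  | one =>
    have h := abs_g_sub_le (a 0) hx.1 hy.1
    have h1 : (1:ℝ) ≤ ((a 0:ℕ):ℝ) := one_le_coe _
    have hinv : (((a 0:ℕ):ℝ))⁻¹ ≤ 1 := by rw [inv_le_one_iff₀]; right; exact h1
    have hle : (((a 0:ℕ):ℝ))⁻¹ ^ 2 ≤ 1 := pow_le_one₀ (by positivity) hinv
    have hh : |itApp 1 a x - itApp 1 a y| ≤ 1 * |x - y| :=
      le_trans h (mul_le_mul_of_nonneg_right hle (abs_nonneg _))
    have h2 : (1:ℝ) * |x - y| ≤ 2 * (2:ℝ)⁻¹ ^ 1 * |x - y| := by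
      have : (2:ℝ) * (2:ℝ)⁻¹ ^ 1 = 1 := by norm_num
      rw [this]
    linarith
  | more n ih _ =>
    -- two steps
    set b : ℕ → ℕ+ := fun k => a (k + 2) with hb
    have hstep : ∀ z : ℝ, itApp (n + 2) a z = g (a 0) (g (a 1) (itApp n b z)) := by
      intro z
      simp only [itApp]
      rfl
    set u := itApp n b x with hudef
    set v := itApp n b y with hvdef
    have hu : u ∈ Icc (0:ℝ) 1 := itApp_mem hx
    have hv : v ∈ Icc (0:ℝ) 1 := itApp_mem hy
    have hgu : g (a 1) u ∈ Icc (0:ℝ) 1 := g_mem hu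
    have hgv : g (a 1) v ∈ Icc (0:ℝ) 1 := g_mem hv
    have h1 : (1:ℝ) ≤ ((a 0:ℕ):ℝ) := one_le_coe _
    have h2 : (1:ℝ) ≤ ((a 1:ℕ):ℝ) := one_le_coe _
    -- key two-step contraction by factor 1/4
    have key : |g (a 0) (g (a 1) u) - g (a 0) (g (a 1) v)| ≤ (4:ℝ)⁻¹ * |u - v| := by
      have e1 : g (a 0) (g (a 1) u) - g (a 0) (g (a 1) v)
          = (g (a 1) v - g (a 1) u) / ((((a 0:ℕ):ℝ) + g (a 1) u) * (((a 0:ℕ):ℝ) + g (a 1) v)) :=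
        g_sub _ hgu.1 hgv.1
      have e2 : g (a 1) u - g (a 1) v = (v - u) / ((((a 1:ℕ):ℝ) + u) * (((a 1:ℕ):ℝ) + v)) :=
        g_sub _ hu.1 hv.1
      have e2' : g (a 1) v - g (a 1) u = (u - v) / ((((a 1:ℕ):ℝ) + v) * (((a 1:ℕ):ℝ) + u)) :=
        g_sub _ hv.1 hu.1
      rw [e1, e2', abs_div, abs_div]
      have hAu : (0:ℝ) < ((a 1:ℕ):ℝ) + u := by linarith [hu.1]
      have hAv : (0:ℝ) < ((a 1:ℕ):ℝ) + v := by linarith [hv.1]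
      have hBu : (0:ℝ) < ((a 0:ℕ):ℝ) + g (a 1) u := by linarith [hgu.1]
      have hBv : (0:ℝ) < ((a 0:ℕ):ℝ) + g (a 1) v := by linarith [hgv.1]
      have d1 : |(((a 1:ℕ):ℝ) + v) * (((a 1:ℕ):ℝ) + u)| = (((a 1:ℕ):ℝ) + v) * (((a 1:ℕ):ℝ) + u) :=
        abs_of_pos (by positivity)
      have d2 : |(((a 0:ℕ):ℝ) + g (a 1) u) * (((a 0:ℕ):ℝ) + g (a 1) v)|
          = (((a 0:ℕ):ℝ) + g (a 1) u) * (((a 0:ℕ):ℝ) + g (a 1) v) := abs_of_pos (by positivity)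
      rw [d1, d2]
      rw [div_div]
      rw [div_le_iff₀ (by positivity)]
      -- (a0 + g_{a1} u)(a1 + u) = a0 (a1+u) + 1 ≥ 2
      have gu_eq : g (a 1) u = (((a 1:ℕ):ℝ) + u)⁻¹ := rfl
      have gv_eq : g (a 1) v = (((a 1:ℕ):ℝ) + v)⁻¹ := rfl
      have prod_u : (((a 0:ℕ):ℝ) + g (a 1) u) * (((a 1:ℕ):ℝ) + u)
          = ((a 0:ℕ):ℝ) * (((a 1:ℕ):ℝ) + u) + 1 := by
        rw [gu_eq]; field_simp
      have prod_v : (((a 0:ℕ):ℝ) + g (a 1) v) * (((a 1:ℕ):ℝ) + v)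
          = ((a 0:ℕ):ℝ) * (((a 1:ℕ):ℝ) + v) + 1 := by
        rw [gv_eq]; field_simp
      have hu2 : (2:ℝ) ≤ (((a 0:ℕ):ℝ) + g (a 1) u) * (((a 1:ℕ):ℝ) + u) := by
        rw [prod_u]; nlinarith [hu.1]
      have hv2 : (2:ℝ) ≤ (((a 0:ℕ):ℝ) + g (a 1) v) * (((a 1:ℕ):ℝ) + v) := by
        rw [prod_v]; nlinarith [hv.1]
      have h4 : (4:ℝ) ≤ ((((a 1:ℕ):ℝ) + v) * (((a 1:ℕ):ℝ) + u)) *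
          ((((a 0:ℕ):ℝ) + g (a 1) u) * (((a 0:ℕ):ℝ) + g (a 1) v)) := by
        nlinarith [hu2, hv2, hBu, hBv, hAu, hAv]
      calc |u - v| = (4:ℝ)⁻¹ * |u - v| * 4 := by ring
        _ ≤ (4:ℝ)⁻¹ * |u - v| * ((((a 1:ℕ):ℝ) + v) * (((a 1:ℕ):ℝ) + u) *
            ((((a 0:ℕ):ℝ) + g (a 1) u) * (((a 0:ℕ):ℝ) + g (a 1) v))) := by
          apply mul_le_mul_of_nonneg_left h4; positivity
    calc |itApp (n+2) a x - itApp (n+2) a y|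
        = |g (a 0) (g (a 1) (itApp n b x)) - g (a 0) (g (a 1) (itApp n b y))| := by
          rw [hstep, hstep]
      _ ≤ (4:ℝ)⁻¹ * |u - v| := key
      _ ≤ (4:ℝ)⁻¹ * (2 * (2:ℝ)⁻¹ ^ n * |x - y|) := by
          apply mul_le_mul_of_nonneg_left (ih b) (by norm_num)
      _ = 2 * (2:ℝ)⁻¹ ^ (n+2) * |x - y| := by ring

lemma cfApprox_mem (n : ℕ) (a : ℕ → ℕ+) : cfApprox n a ∈ Icc (0:ℝ) 1 := by
  rw [cfApprox_eq]; exact itApp_mem (by norm_num)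

lemma cfApprox_add (n m : ℕ) (a : ℕ → ℕ+) :
    cfApprox (n + m) a = itApp n a (cfApprox m (fun k => a (k + n))) := by
  rw [cfApprox_eq, itApp_add, ← cfApprox_eq]

lemma dist_cfApprox (n m : ℕ) (a : ℕ → ℕ+) :
    |cfApprox (n + m) a - cfApprox n a| ≤ 2 * (2:ℝ)⁻¹ ^ n := by
  rw [cfApprox_add, cfApprox_eq n a]
  have h := lipB n a (cfApprox_mem m (fun k => a (k + n))) (show (0:ℝ) ∈ Icc (0:ℝ) 1 by norm_num)
  have hmem := cfApprox_mem m (fun k => a (k + n))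
  have : |cfApprox m (fun k => a (k + n)) - 0| ≤ 1 := by
    rw [sub_zero, abs_of_nonneg hmem.1]; exact hmem.2
  calc |itApp n a (cfApprox m (fun k => a (k + n))) - itApp n a 0|
      ≤ 2 * (2:ℝ)⁻¹ ^ n * |cfApprox m (fun k => a (k + n)) - 0| := h
    _ ≤ 2 * (2:ℝ)⁻¹ ^ n * 1 := by
        apply mul_le_mul_of_nonneg_left this; positivity
    _ = 2 * (2:ℝ)⁻¹ ^ n := mul_one _

lemma tendsto_cfApprox (a : ℕ → ℕ+) :
    Tendsto (fun n => cfApprox n a) atTop (𝓝 (cfVal a)) := by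
  have hc : CauchySeq (fun n => cfApprox n a) := by
    apply cauchySeq_of_le_geometric (r := (2:ℝ)⁻¹) (C := 2) (by norm_num)
    intro n
    have := dist_cfApprox n 1 a
    rw [Real.dist_eq]
    calc |cfApprox n a - cfApprox (n+1) a| = |cfApprox (n + 1) a - cfApprox n a| :=
          abs_sub_comm _ _
      _ ≤ 2 * (2:ℝ)⁻¹ ^ n := this
  obtain ⟨x, hx⟩ := cauchySeq_tendsto_of_complete hc
  have : cfVal a = x := hx.limUnder_eq
  rw [this]; exact hx

lemma cfVal_mem (a : ℕ → ℕ+) : cfVal a ∈ Icc (0:ℝ) 1 := by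
  have := tendsto_cfApprox a
  exact isClosed_Icc.mem_of_tendsto this (Eventually.of_forall fun n => cfApprox_mem n a)

lemma measurable_cfApprox (n : ℕ) : Measurable (cfApprox n) := by
  induction n with
  | zero => exact measurable_const
  | succ n ih =>
    have h1 : Measurable fun a : ℕ → ℕ+ => ((a 0 : ℕ) : ℝ) :=
      Measurable.comp (g := fun i : ℕ+ => ((i:ℕ):ℝ)) measurable_from_top (measurable_pi_apply 0)
    have h2 : Measurable fun a : ℕ → ℕ+ => cfApprox n (fun k => a (k + 1)) :=
      ih.comp (measurable_pi_lambda _ fun k => measurable_pi_apply (k + 1))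
    exact (h1.add h2).inv

lemma measurable_cfVal : Measurable cfVal :=
  measurable_of_tendsto_metrizable measurable_cfApprox
    (tendsto_pi_nhds.2 fun a => tendsto_cfApprox a)

lemma itApp_congr {n : ℕ} {a a' : ℕ → ℕ+} (h : ∀ k < n, a k = a' k) (x : ℝ) :
    itApp n a x = itApp n a' x := by
  induction n generalizing a a' with
  | zero => rfl
  | succ n ih =>
    simp only [itApp]
    rw [h 0 (by omega), ih (fun k hk => h (k+1) (by omega))]

/-- diameter bound for images of cylinders. -/
lemma cfVal_dist_of_agree {n : ℕ} {a a' : ℕ → ℕ+} (h : ∀ k < n, a k = a' k) :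
    |cfVal a - cfVal a'| ≤ min (∏ k ∈ Finset.range n, (((a k : ℕ):ℝ))⁻¹ ^ 2) (2 * (2:ℝ)⁻¹ ^ n) := by
  have key : ∀ m : ℕ, |cfApprox (n + m) a - cfApprox (n + m) a'|
      ≤ min (∏ k ∈ Finset.range n, (((a k : ℕ):ℝ))⁻¹ ^ 2) (2 * (2:ℝ)⁻¹ ^ n) := by
    intro m
    rw [cfApprox_add, cfApprox_add, itApp_congr h (cfApprox m (fun k => a (k + n)))]
    set u := cfApprox m (fun k => a (k + n)) with hu
    set v := cfApprox m (fun k => a' (k + n)) with hv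
    have hum := cfApprox_mem m (fun k => a (k + n))
    have hvm := cfApprox_mem m (fun k => a' (k + n))
    have huv : |u - v| ≤ 1 := by
      rw [abs_sub_le_iff]; constructor <;> linarith [hum.1, hum.2, hvm.1, hvm.2]
    apply le_min
    · calc |itApp n a' u - itApp n a' v|
          ≤ (∏ k ∈ Finset.range n, (((a' k : ℕ):ℝ))⁻¹ ^ 2) * |u - v| := lipA n a' hum hvm
        _ ≤ (∏ k ∈ Finset.range n, (((a' k : ℕ):ℝ))⁻¹ ^ 2) * 1 := by
            apply mul_le_mul_of_nonneg_left huv; positivity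
        _ = ∏ k ∈ Finset.range n, (((a k : ℕ):ℝ))⁻¹ ^ 2 := by
            rw [mul_one]
            exact Finset.prod_congr rfl fun k hk => by
              rw [h k (Finset.mem_range.1 hk)]
    · calc |itApp n a' u - itApp n a' v| ≤ 2 * (2:ℝ)⁻¹ ^ n * |u - v| := lipB n a' hum hvm
        _ ≤ 2 * (2:ℝ)⁻¹ ^ n * 1 := by apply mul_le_mul_of_nonneg_left huv; positivity
        _ = 2 * (2:ℝ)⁻¹ ^ n := mul_one _
  have h1 : Tendsto (fun m => cfApprox (n + m) a - cfApprox (n + m) a') atTop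
      (𝓝 (cfVal a - cfVal a')) := by
    have ha : Tendsto (fun m => cfApprox (n + m) a) atTop (𝓝 (cfVal a)) := by
      have := (tendsto_cfApprox a).comp (tendsto_add_atTop_nat n)
      simpa [Function.comp_def, Nat.add_comm] using this
    have ha' : Tendsto (fun m => cfApprox (n + m) a') atTop (𝓝 (cfVal a')) := by
      have := (tendsto_cfApprox a').comp (tendsto_add_atTop_nat n)
      simpa [Function.comp_def, Nat.add_comm] using this
    exact ha.sub ha'
  exact le_of_tendsto h1.abs (Eventually.of_forall key)



variable {p : ℕ+ → ℝ} {m : Measure (ℕ → ℕ+)}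

lemma constraint_measurable (S : Finset ℕ) (c : ℕ → ℕ+) :
    MeasurableSet {a : ℕ → ℕ+ | ∀ k ∈ S, a k = c k} := by
  have h : {a : ℕ → ℕ+ | ∀ k ∈ S, a k = c k} = ⋂ k ∈ (S : Set ℕ), (fun a : ℕ → ℕ+ => a k) ⁻¹' {c k} := by
    ext a; simp
  rw [h]
  exact MeasurableSet.biInter S.countable_toSet
    (fun k _ => (measurable_pi_apply k) (measurableSet_singleton (c k)))

lemma tsum_ofReal_p (hp : IsProbVec p) : (∑' i : ℕ+, ENNReal.ofReal (p i)) = 1 := by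
  rw [← ENNReal.ofReal_tsum_of_nonneg hp.1 hp.2.summable, hp.2.tsum_eq, ENNReal.ofReal_one]

lemma measure_constraint (hp : IsProbVec p) (hb : IsBernoulli p m) :
    ∀ (d n : ℕ) (S : Finset ℕ) (c : ℕ → ℕ+), S ⊆ Finset.range n → n - S.card ≤ d →
      m {a | ∀ k ∈ S, a k = c k} = ENNReal.ofReal (∏ k ∈ S, p (c k)) := by
  have base : ∀ (n : ℕ) (c : ℕ → ℕ+),
      m {a | ∀ k ∈ Finset.range n, a k = c k} = ENNReal.ofReal (∏ k ∈ Finset.range n, p (c k)) := by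
    intro n c
    have h : {a : ℕ → ℕ+ | ∀ k ∈ Finset.range n, a k = c k} = {a | ∀ k < n, a k = c k} := by
      ext a; simp [Finset.mem_range]
    rw [h, hb n c]
  intro d
  induction d with
  | zero =>
    intro n S c hsub hcard
    have hS : S = Finset.range n := by
      apply Finset.eq_of_subset_of_card_le hsub
      have := Finset.card_range n
      omega
    subst hS; exact base n c
  | succ d ih =>
    intro n S c hsub hcard
    by_cases hS : S = Finset.range n
    · subst hS; exact base n c
    · obtain ⟨j, hjn, hjS⟩ := Finset.exists_of_ssubset (hsub.ssubset_of_ne hS)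
      have decomp : {a : ℕ → ℕ+ | ∀ k ∈ S, a k = c k}
          = ⋃ i : ℕ+, {a : ℕ → ℕ+ | ∀ k ∈ insert j S, a k = Function.update c j i k} := by
        ext a
        simp only [mem_iUnion, mem_setOf_eq]
        constructor
        · intro h
          refine ⟨a j, fun k hk => ?_⟩
          rcases Finset.mem_insert.1 hk with rfl | hkS
          · rw [Function.update_self]
          · rw [Function.update_of_ne (show k ≠ j by rintro rfl; exact hjS hkS) _ _]
            exact h k hkS
        · rintro ⟨i, h⟩ k hk
          have h2 := h k (Finset.mem_insert_of_mem hk)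
          rwa [Function.update_of_ne (show k ≠ j by rintro rfl; exact hjS hk) _ _] at h2
      have hdisj : Pairwise (Function.onFun Disjoint
          fun i : ℕ+ => {a : ℕ → ℕ+ | ∀ k ∈ insert j S, a k = Function.update c j i k}) := by
        intro i i' hii
        refine Set.disjoint_left.2 fun a ha ha' => hii ?_
        have h1 := ha j (Finset.mem_insert_self j S)
        have h2 := ha' j (Finset.mem_insert_self j S)
        rw [Function.update_self] at h1 h2
        rw [← h1, ← h2]
      rw [decomp, measure_iUnion hdisj (fun i => constraint_measurable _ _)]
      have hval : ∀ i : ℕ+,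
          m {a : ℕ → ℕ+ | ∀ k ∈ insert j S, a k = Function.update c j i k}
            = ENNReal.ofReal (p i) * ENNReal.ofReal (∏ k ∈ S, p (c k)) := by
        intro i
        have hsub' : insert j S ⊆ Finset.range n := Finset.insert_subset hjn hsub
        have hcard' : n - (insert j S).card ≤ d := by
          rw [Finset.card_insert_of_notMem hjS]
          omega
        rw [ih n (insert j S) (Function.update c j i) hsub' hcard']
        have hprod : (∏ k ∈ insert j S, p (Function.update c j i k))
            = p i * ∏ k ∈ S, p (c k) := by
          rw [Finset.prod_insert hjS, Function.update_self]
          congr 1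
          exact Finset.prod_congr rfl fun k hk => by
            rw [Function.update_of_ne (show k ≠ j by rintro rfl; exact hjS hk) _ _]
        rw [hprod, ENNReal.ofReal_mul (hp.1 i)]
      calc (∑' i : ℕ+, m {a : ℕ → ℕ+ | ∀ k ∈ insert j S, a k = Function.update c j i k})
          = ∑' i : ℕ+, ENNReal.ofReal (p i) * ENNReal.ofReal (∏ k ∈ S, p (c k)) := by
            exact tsum_congr hval
        _ = (∑' i : ℕ+, ENNReal.ofReal (p i)) * ENNReal.ofReal (∏ k ∈ S, p (c k)) :=
            ENNReal.tsum_mul_right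
        _ = ENNReal.ofReal (∏ k ∈ S, p (c k)) := by rw [tsum_ofReal_p hp, one_mul]

lemma measure_single (hp : IsProbVec p) (hb : IsBernoulli p m) (k : ℕ) (i : ℕ+) :
    m {a : ℕ → ℕ+ | a k = i} = ENNReal.ofReal (p i) := by
  have h := measure_constraint hp hb (k + 1) (k + 1) {k} (fun _ => i)
    (by simp [Finset.singleton_subset_iff, Finset.mem_range]) (by simp)
  simpa using h

lemma measure_pair (hp : IsProbVec p) (hb : IsBernoulli p m) {j k : ℕ} (hjk : j ≠ k) (i i' : ℕ+) :
    m {a : ℕ → ℕ+ | a j = i ∧ a k = i'}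
      = ENNReal.ofReal (p i) * ENNReal.ofReal (p i') := by
  classical
  set c : ℕ → ℕ+ := Function.update (Function.update (fun _ => 1) j i) k i' with hc
  have hcj : c j = i := by rw [hc, Function.update_of_ne hjk, Function.update_self]
  have hck : c k = i' := by rw [hc, Function.update_self]
  have hset : {a : ℕ → ℕ+ | a j = i ∧ a k = i'} = {a : ℕ → ℕ+ | ∀ l ∈ ({j, k} : Finset ℕ), a l = c l} := by
    ext a
    simp only [mem_setOf_eq, Finset.mem_insert, Finset.mem_singleton]
    constructor
    · rintro ⟨h1, h2⟩ l hl
      rcases hl with rfl | rfl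
      · rw [hcj]; exact h1
      · rw [hck]; exact h2
    · intro h
      exact ⟨by rw [← hcj]; exact h j (Or.inl rfl), by rw [← hck]; exact h k (Or.inr rfl)⟩
  have hsub : ({j, k} : Finset ℕ) ⊆ Finset.range (max j k + 1) := by
    intro l hl
    rcases Finset.mem_insert.1 hl with rfl | hl
    · exact Finset.mem_range.2 (by omega)
    · rw [Finset.mem_singleton] at hl
      subst hl; exact Finset.mem_range.2 (by omega)
  have h := measure_constraint hp hb (max j k + 1) (max j k + 1) {j, k} c hsub (by omega)
  rw [hset, h, Finset.prod_insert (by simpa using hjk), Finset.prod_singleton, hcj, hck,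
    ENNReal.ofReal_mul (hp.1 i)]

lemma measure_eval_preimage (hp : IsProbVec p) (hb : IsBernoulli p m) (k : ℕ) (s : Set ℕ+) :
    m ((fun a : ℕ → ℕ+ => a k) ⁻¹' s) = ∑' i : s, ENNReal.ofReal (p i) := by
  have h : (fun a : ℕ → ℕ+ => a k) ⁻¹' s = ⋃ i : s, {a : ℕ → ℕ+ | a k = i} := by
    ext a; simp only [mem_preimage, mem_iUnion, mem_setOf_eq]
    exact ⟨fun h => ⟨⟨a k, h⟩, rfl⟩, fun ⟨i, hi⟩ => hi ▸ i.2⟩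
  rw [h, measure_iUnion ?_ (fun i => by
    have : {a : ℕ → ℕ+ | a k = (i : ℕ+)} = (fun a : ℕ → ℕ+ => a k) ⁻¹' {(i : ℕ+)} := rfl
    rw [this]; exact (measurable_pi_apply k) (measurableSet_singleton _))]
  · exact tsum_congr fun i => measure_single hp hb k i
  · intro i i' hii
    refine Set.disjoint_left.2 fun a ha ha' => hii ?_
    exact Subtype.ext (by rw [← ha, ← ha'])

lemma identDistrib_eval (hp : IsProbVec p) (hb : IsBernoulli p m) (k : ℕ) :
    ProbabilityTheory.IdentDistrib (fun a : ℕ → ℕ+ => a k) (fun a : ℕ → ℕ+ => a 0) m m := by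
  refine ⟨(measurable_pi_apply k).aemeasurable, (measurable_pi_apply 0).aemeasurable, ?_⟩
  ext s hs
  rw [Measure.map_apply (measurable_pi_apply k) hs, Measure.map_apply (measurable_pi_apply 0) hs,
    measure_eval_preimage hp hb, measure_eval_preimage hp hb]

lemma indepFun_eval (hp : IsProbVec p) (hb : IsBernoulli p m) {j k : ℕ} (hjk : j ≠ k) :
    ProbabilityTheory.IndepFun (fun a : ℕ → ℕ+ => a j) (fun a : ℕ → ℕ+ => a k) m := by
  rw [ProbabilityTheory.indepFun_iff_measure_inter_preimage_eq_mul]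
  intro s t _ _
  have hmeas_pair : ∀ (x y : ℕ+), MeasurableSet {a : ℕ → ℕ+ | a j = x ∧ a k = y} := by
    intro x y
    have : {a : ℕ → ℕ+ | a j = x ∧ a k = y}
        = (fun a : ℕ → ℕ+ => a j) ⁻¹' {x} ∩ (fun a : ℕ → ℕ+ => a k) ⁻¹' {y} := by
      ext a; simp [Set.mem_preimage]
    rw [this]
    exact ((measurable_pi_apply j) (measurableSet_singleton _)).inter
      ((measurable_pi_apply k) (measurableSet_singleton _))
  have hinner : ∀ x : ℕ+, m ({a : ℕ → ℕ+ | a j = x} ∩ (fun a : ℕ → ℕ+ => a k) ⁻¹' t)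
      = ENNReal.ofReal (p x) * ∑' i' : t, ENNReal.ofReal (p i') := by
    intro x
    have hu : {a : ℕ → ℕ+ | a j = x} ∩ (fun a : ℕ → ℕ+ => a k) ⁻¹' t
        = ⋃ i' : t, {a : ℕ → ℕ+ | a j = x ∧ a k = i'} := by
      ext a
      simp only [mem_inter_iff, mem_preimage, mem_iUnion, mem_setOf_eq]
      constructor
      · rintro ⟨h1, h2⟩; exact ⟨⟨a k, h2⟩, h1, rfl⟩
      · rintro ⟨i', h1, h2⟩; exact ⟨h1, h2 ▸ i'.2⟩
    have hd : Pairwise (Function.onFun Disjoint fun i' : t => {a : ℕ → ℕ+ | a j = x ∧ a k = (i' : ℕ+)}) := by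
      intro q q' hqq
      refine Set.disjoint_left.2 fun a ha ha' => hqq ?_
      exact Subtype.ext (by rw [← ha.2, ← ha'.2])
    rw [hu, measure_iUnion hd (fun i' => hmeas_pair x i')]
    rw [tsum_congr (fun i' : t => measure_pair hp hb hjk x i')]
    exact ENNReal.tsum_mul_left
  have houter : (fun a : ℕ → ℕ+ => a j) ⁻¹' s ∩ (fun a : ℕ → ℕ+ => a k) ⁻¹' t
      = ⋃ x : s, ({a : ℕ → ℕ+ | a j = (x : ℕ+)} ∩ (fun a : ℕ → ℕ+ => a k) ⁻¹' t) := by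
    ext a
    simp only [mem_inter_iff, mem_preimage, mem_iUnion, mem_setOf_eq]
    constructor
    · rintro ⟨h1, h2⟩; exact ⟨⟨a j, h1⟩, rfl, h2⟩
    · rintro ⟨x, h1, h2⟩; exact ⟨h1 ▸ x.2, h2⟩
  have hdo : Pairwise (Function.onFun Disjoint
      fun x : s => {a : ℕ → ℕ+ | a j = (x : ℕ+)} ∩ (fun a : ℕ → ℕ+ => a k) ⁻¹' t) := by
    intro q q' hqq
    refine Set.disjoint_left.2 fun a ha ha' => hqq ?_
    exact Subtype.ext (by rw [← ha.1, ← ha'.1])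
  have hmo : ∀ x : s, MeasurableSet
      ({a : ℕ → ℕ+ | a j = (x : ℕ+)} ∩ (fun a : ℕ → ℕ+ => a k) ⁻¹' t) := by
    intro x
    refine MeasurableSet.inter ?_ ((measurable_pi_apply k) (by trivial))
    exact (measurable_pi_apply j) (measurableSet_singleton _)
  rw [houter, measure_iUnion hdo hmo, tsum_congr (fun x : s => hinner x),
    ENNReal.tsum_mul_right, measure_eval_preimage hp hb, measure_eval_preimage hp hb]

lemma integrable_comp_eval0 (hp : IsProbVec p) (hb : IsBernoulli p m)
    {F : ℕ+ → ℝ} (hs : Summable fun i => p i * |F i|) :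
    Integrable (fun a : ℕ → ℕ+ => F (a 0)) m := by
  have hmeasF : Measurable F := measurable_from_top
  have hmap : Integrable F (m.map (fun a : ℕ → ℕ+ => a 0)) := by
    refine ⟨hmeasF.aestronglyMeasurable, ?_⟩
    show (∫⁻ i, (‖F i‖₊ : ℝ≥0∞) ∂(m.map fun a : ℕ → ℕ+ => a 0)) < ⊤
    rw [lintegral_countable']
    have hval : ∀ i : ℕ+, (‖F i‖₊ : ℝ≥0∞) * (m.map (fun a : ℕ → ℕ+ => a 0)) {i}
        = ENNReal.ofReal (p i * |F i|) := by
      intro i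
      rw [Measure.map_apply (measurable_pi_apply 0) (measurableSet_singleton i)]
      have hpre : (fun a : ℕ → ℕ+ => a 0) ⁻¹' {i} = {a : ℕ → ℕ+ | a 0 = i} := rfl
      rw [hpre, measure_single hp hb, ← enorm_eq_nnnorm, Real.enorm_eq_ofReal_abs,
        ← ENNReal.ofReal_mul (abs_nonneg _)]
      congr 1
      ring
    rw [tsum_congr hval, ← ENNReal.ofReal_tsum_of_nonneg
      (fun i => mul_nonneg (hp.1 i) (abs_nonneg _)) hs]
    exact ENNReal.ofReal_lt_top
  exact (integrable_map_measure hmeasF.aestronglyMeasurable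
    (measurable_pi_apply 0).aemeasurable).1 hmap

lemma integral_comp_eval0 (hp : IsProbVec p) (hb : IsBernoulli p m)
    {F : ℕ+ → ℝ} (hs : Summable fun i => p i * |F i|) :
    ∫ a, F (a 0) ∂m = ∑' i : ℕ+, p i * F i := by
  have hmeasF : Measurable F := measurable_from_top
  have h1 : ∫ a, F (a 0) ∂m = ∫ x, F x ∂(m.map (fun a : ℕ → ℕ+ => a 0)) :=
    (integral_map (measurable_pi_apply 0).aemeasurable hmeasF.aestronglyMeasurable).symm
  have hint : Integrable F (m.map (fun a : ℕ → ℕ+ => a 0)) :=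
    (integrable_map_measure hmeasF.aestronglyMeasurable
      (measurable_pi_apply 0).aemeasurable).2 (integrable_comp_eval0 hp hb hs)
  rw [h1, integral_countable' hint]
  refine tsum_congr fun i => ?_
  rw [measureReal_def, Measure.map_apply (measurable_pi_apply 0) (measurableSet_singleton i)]
  have hpre : (fun a : ℕ → ℕ+ => a 0) ⁻¹' {i} = {a : ℕ → ℕ+ | a 0 = i} := rfl
  rw [hpre, measure_single hp hb, ENNReal.toReal_ofReal (hp.1 i), smul_eq_mul]

lemma slln_eval (hp : IsProbVec p) (hb : IsBernoulli p m)
    {F : ℕ+ → ℝ} (hs : Summable fun i => p i * |F i|) :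
    ∀ᵐ a ∂m, Tendsto (fun n : ℕ => (∑ k ∈ Finset.range n, F (a k)) / n) atTop
      (𝓝 (∑' i : ℕ+, p i * F i)) := by
  have hmeasF : Measurable F := measurable_from_top
  have hindep : Pairwise (Function.onFun (ProbabilityTheory.IndepFun · · m) fun k (a : ℕ → ℕ+) => F (a k)) :=
    fun i j hij => (indepFun_eval hp hb hij).comp hmeasF hmeasF
  have hident : ∀ i, ProbabilityTheory.IdentDistrib (fun a : ℕ → ℕ+ => F (a i))
      (fun a : ℕ → ℕ+ => F (a 0)) m m :=
    fun i => (identDistrib_eval hp hb i).comp hmeasF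
  have h := ProbabilityTheory.strong_law_ae_real (fun k (a : ℕ → ℕ+) => F (a k))
    (integrable_comp_eval0 hp hb hs) hindep hident
  rw [integral_comp_eval0 hp hb hs] at h
  exact h



lemma plog_le {q x : ℝ} (hq : 0 < q) (hx : 0 ≤ x) : x * Real.log (q / x) ≤ q := by
  rcases eq_or_lt_of_le hx with h | h
  · simp [← h]; positivity
  · have hlog : Real.log (q / x) ≤ q / x - 1 := Real.log_le_sub_one_of_pos (by positivity)
    calc x * Real.log (q / x) ≤ x * (q / x - 1) := by
          apply mul_le_mul_of_nonneg_left hlog hx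
      _ = q - x := by field_simp
      _ ≤ q := by linarith

lemma one_le_pnat_real (i : ℕ+) : (1:ℝ) ≤ ((i:ℕ):ℝ) := by
  exact_mod_cast Nat.one_le_iff_ne_zero.2 i.pos.ne'

lemma log_pnat_nonneg (i : ℕ+) : 0 ≤ Real.log ((i:ℕ):ℝ) :=
  Real.log_nonneg (one_le_pnat_real i)

/-- entropy term bound : -(p log p) ≤ 2 p log i + i⁻². -/
lemma neg_plogp_le {p : ℕ+ → ℝ} (hp0 : ∀ i, 0 ≤ p i) (hp1 : ∀ i, p i ≤ 1) (i : ℕ+) :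
    -(p i * Real.log (p i)) ≤ 2 * (p i * Real.log ((i:ℕ):ℝ)) + (((i:ℕ):ℝ))⁻¹ ^ 2 := by
  have hi : (1:ℝ) ≤ ((i:ℕ):ℝ) := one_le_pnat_real i
  have hipos : (0:ℝ) < ((i:ℕ):ℝ) := by linarith
  rcases eq_or_lt_of_le (hp0 i) with h | h
  · rw [← h]
    have : (0:ℝ) ≤ (((i:ℕ):ℝ))⁻¹ ^ 2 := by positivity
    simpa using this
  · have hq : (0:ℝ) < (((i:ℕ):ℝ))⁻¹ ^ 2 := by positivity
    have key : p i * Real.log ((((i:ℕ):ℝ))⁻¹ ^ 2 / p i) ≤ (((i:ℕ):ℝ))⁻¹ ^ 2 :=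
      plog_le hq (hp0 i)
    have hlog : Real.log ((((i:ℕ):ℝ))⁻¹ ^ 2 / p i)
        = -2 * Real.log ((i:ℕ):ℝ) - Real.log (p i) := by
      rw [Real.log_div (by positivity) h.ne', Real.log_pow, Real.log_inv]
      push_cast
      ring
    rw [hlog] at key
    nlinarith [key]

lemma summable_inv_sq_pnat : Summable (fun i : ℕ+ => (((i:ℕ):ℝ))⁻¹ ^ 2) := by
  have h : Summable (fun n : ℕ => ((n:ℝ))⁻¹ ^ 2) := by
    have := Real.summable_one_div_nat_pow.2 (le_refl 2)
    simpa [one_div, inv_pow] using this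
  exact h.comp_injective PNat.coe_injective

lemma summable_inv_rpow_pnat {r : ℝ} (hr : 1 < r) :
    Summable (fun i : ℕ+ => (((i:ℕ):ℝ) ^ r)⁻¹) := by
  have h : Summable (fun n : ℕ => ((n:ℝ) ^ r)⁻¹) := Real.summable_nat_rpow_inv.2 hr
  exact h.comp_injective PNat.coe_injective

/-- infinite entropy forces infinite mean log. -/
lemma not_summable_plog {p : ℕ+ → ℝ} (hp0 : ∀ i, 0 ≤ p i) (hp1 : ∀ i, p i ≤ 1)
    (hent : ¬ Summable (fun i : ℕ+ => p i * Real.log (p i))) :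
    ¬ Summable (fun i : ℕ+ => p i * Real.log ((i:ℕ):ℝ)) := by
  intro hS
  apply hent
  have h1 : Summable (fun i : ℕ+ => 2 * (p i * Real.log ((i:ℕ):ℝ)) + (((i:ℕ):ℝ))⁻¹ ^ 2) :=
    ((hS.mul_left 2).add summable_inv_sq_pnat)
  have h2 : Summable (fun i : ℕ+ => -(p i * Real.log (p i))) := by
    apply h1.of_nonneg_of_le (fun i => ?_) (fun i => neg_plogp_le hp0 hp1 i)
    rcases eq_or_lt_of_le (hp0 i) with h | h
    · simp [← h]
    · have : Real.log (p i) ≤ 0 := Real.log_nonpos (hp0 i) (hp1 i)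
      nlinarith
  simpa using h2.neg

/-- the positive-part random variable X and its summability. -/
lemma pX_le {p : ℕ+ → ℝ} (hp0 : ∀ i, 0 ≤ p i) {σ : ℝ} (hσ : 0 < σ) (i : ℕ+) :
    p i * max (-Real.log (p i) - 2 * σ * Real.log ((i:ℕ):ℝ)) 0 ≤ (((i:ℕ):ℝ) ^ (2*σ))⁻¹ := by
  have hi : (1:ℝ) ≤ ((i:ℕ):ℝ) := one_le_pnat_real i
  have hipos : (0:ℝ) < ((i:ℕ):ℝ) := by linarith
  have hqpos : (0:ℝ) < (((i:ℕ):ℝ) ^ (2*σ))⁻¹ := by positivity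
  rcases eq_or_lt_of_le (hp0 i) with h | h
  · rw [← h]
    simpa using hqpos.le
  · rcases le_or_gt (-Real.log (p i) - 2 * σ * Real.log ((i:ℕ):ℝ)) 0 with hle | hlt
    · rw [max_eq_right hle]
      simpa using hqpos.le
    · rw [max_eq_left hlt.le]
      have hkey : p i * Real.log ((((i:ℕ):ℝ) ^ (2*σ))⁻¹ / p i) ≤ (((i:ℕ):ℝ) ^ (2*σ))⁻¹ :=
        plog_le hqpos (hp0 i)
      have hlog : Real.log ((((i:ℕ):ℝ) ^ (2*σ))⁻¹ / p i)
          = -Real.log (p i) - 2 * σ * Real.log ((i:ℕ):ℝ) := by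
        rw [Real.log_div (by positivity) h.ne', Real.log_inv,
          Real.log_rpow hipos]
        ring
      rw [hlog] at hkey
      exact hkey

lemma summable_pX {p : ℕ+ → ℝ} (hp0 : ∀ i, 0 ≤ p i) {σ : ℝ} (hσ : 1/2 < σ) :
    Summable (fun i : ℕ+ =>
      p i * |max (-Real.log (p i) - 2 * σ * Real.log ((i:ℕ):ℝ)) 0|) := by
  have hσ0 : 0 < σ := by linarith
  apply (summable_inv_rpow_pnat (r := 2*σ) (by linarith)).of_nonneg_of_le
  · intro i
    exact mul_nonneg (hp0 i) (abs_nonneg _)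
  · intro i
    rw [abs_of_nonneg (le_max_right _ _)]
    exact pX_le hp0 hσ0 i

lemma summable_pGM {p : ℕ+ → ℝ} (hp0 : ∀ i, 0 ≤ p i) (hps : Summable p) (M : ℕ) :
    Summable (fun i : ℕ+ => p i * |min (Real.log ((i:ℕ):ℝ)) (M:ℝ)|) := by
  apply (hps.mul_right (M:ℝ)).of_nonneg_of_le
  · intro i; exact mul_nonneg (hp0 i) (abs_nonneg _)
  · intro i
    have h1 : 0 ≤ min (Real.log ((i:ℕ):ℝ)) (M:ℝ) := le_min (log_pnat_nonneg i) (by positivity)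
    rw [abs_of_nonneg h1]
    apply mul_le_mul_of_nonneg_left _ (hp0 i)
    exact le_trans (min_le_right _ _) (le_refl _)

/-- truncated means are unbounded. -/
lemma trunc_mean_unbounded {p : ℕ+ → ℝ} (hp0 : ∀ i, 0 ≤ p i) (hps : Summable p)
    (hlog : ¬ Summable (fun i : ℕ+ => p i * Real.log ((i:ℕ):ℝ))) (K : ℝ) :
    ∃ M : ℕ, K ≤ ∑' i : ℕ+, p i * min (Real.log ((i:ℕ):ℝ)) (M:ℝ) := by
  have hnon : ¬ ∀ F : Finset ℕ+, (∑ i ∈ F, p i * Real.log ((i:ℕ):ℝ)) ≤ K := by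
    intro hall
    exact hlog (summable_of_sum_le (fun i => mul_nonneg (hp0 i) (log_pnat_nonneg i)) hall)
  push_neg at hnon
  obtain ⟨F, hF⟩ := hnon
  set M : ℕ := F.sup (fun i => ⌈Real.log ((i:ℕ):ℝ)⌉₊) with hM
  refine ⟨M, ?_⟩
  have hsum : Summable (fun i : ℕ+ => p i * min (Real.log ((i:ℕ):ℝ)) (M:ℝ)) := by
    have h := summable_pGM hp0 hps M
    refine h.congr fun i => ?_
    rw [abs_of_nonneg (le_min (log_pnat_nonneg i) (by positivity))]
  have hFle : (∑ i ∈ F, p i * Real.log ((i:ℕ):ℝ))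
      = ∑ i ∈ F, p i * min (Real.log ((i:ℕ):ℝ)) (M:ℝ) := by
    refine Finset.sum_congr rfl fun i hi => ?_
    have h1 : Real.log ((i:ℕ):ℝ) ≤ (M:ℝ) := by
      calc Real.log ((i:ℕ):ℝ) ≤ (⌈Real.log ((i:ℕ):ℝ)⌉₊ : ℝ) := Nat.le_ceil _
        _ ≤ (M:ℝ) := by
            have := Finset.le_sup (f := fun i : ℕ+ => ⌈Real.log ((i:ℕ):ℝ)⌉₊) hi
            exact_mod_cast this
    rw [min_eq_left h1]
  calc K ≤ ∑ i ∈ F, p i * Real.log ((i:ℕ):ℝ) := hF.le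
    _ = ∑ i ∈ F, p i * min (Real.log ((i:ℕ):ℝ)) (M:ℝ) := hFle
    _ ≤ ∑' i : ℕ+, p i * min (Real.log ((i:ℕ):ℝ)) (M:ℝ) :=
        Summable.sum_le_tsum F (fun i _ => mul_nonneg (hp0 i)
          (le_min (log_pnat_nonneg i) (by positivity))) hsum


section AS
variable {p : ℕ+ → ℝ} {m : Measure (ℕ → ℕ+)}

lemma ae_pos_digits (hp : IsProbVec p) (hb : IsBernoulli p m) :
    ∀ᵐ a ∂m, ∀ k, 0 < p (a k) := by
  rw [ae_all_iff]
  intro k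
  rw [ae_iff]
  have hset : {a : ℕ → ℕ+ | ¬ 0 < p (a k)} = (fun a : ℕ → ℕ+ => a k) ⁻¹' {i | ¬ 0 < p i} := rfl
  rw [hset, measure_eval_preimage hp hb]
  rw [ENNReal.tsum_eq_zero]
  rintro ⟨i, hi⟩
  have : p i = 0 := le_antisymm (not_lt.1 hi) (hp.1 i)
  simp [this]

lemma p_le_one (hp : IsProbVec p) (i : ℕ+) : p i ≤ 1 :=
  le_hasSum hp.2 i (fun j _ => hp.1 j)

/-- The key almost sure statement. -/
lemma ae_constraint (hp : IsProbVec p) (hb : IsBernoulli p m)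
    (hent : ¬ Summable (fun i : ℕ+ => p i * Real.log (p i))) {η : ℝ} (hη : 0 < η) :
    ∀ᵐ a ∂m, (∀ k, 0 < p (a k)) ∧ ∃ N : ℕ, ∀ n ≥ N,
      (∑ k ∈ Finset.range n, -Real.log (p (a k)))
        ≤ 2 * (1/2 + η/2) * ∑ k ∈ Finset.range n, Real.log (((a k : ℕ+) : ℕ):ℝ) := by
  classical
  set σ : ℝ := 1/2 + η/4 with hσdef
  have hσ : 1/2 < σ := by rw [hσdef]; linarith
  set δ : ℝ := η/2 with hδdef
  have hδ : 0 < δ := by rw [hδdef]; linarith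
  set Xf : ℕ+ → ℝ := fun i => max (-Real.log (p i) - 2 * σ * Real.log ((i:ℕ):ℝ)) 0 with hXf
  set GM : ℕ → ℕ+ → ℝ := fun M i => min (Real.log ((i:ℕ):ℝ)) (M:ℝ) with hGM
  have hXsum : Summable (fun i : ℕ+ => p i * |Xf i|) := summable_pX hp.1 hσ
  have hGMsum : ∀ M : ℕ, Summable (fun i : ℕ+ => p i * |GM M i|) :=
    fun M => summable_pGM hp.1 hp.2.summable M
  have hX := slln_eval hp hb hXsum
  have hG : ∀ᵐ a ∂m, ∀ M : ℕ, Tendsto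
      (fun n : ℕ => (∑ k ∈ Finset.range n, GM M (a k)) / n) atTop
      (𝓝 (∑' i : ℕ+, p i * GM M i)) :=
    ae_all_iff.2 fun M => slln_eval hp hb (hGMsum M)
  filter_upwards [hX, hG, ae_pos_digits hp hb] with a tX tG hpos
  refine ⟨hpos, ?_⟩
  set CX : ℝ := ∑' i : ℕ+, p i * Xf i with hCX
  obtain ⟨M, hMK⟩ := trunc_mean_unbounded hp.1 hp.2.summable
    (not_summable_plog hp.1 (p_le_one hp) hent) ((CX + 1)/δ + 1)
  set EM : ℝ := ∑' i : ℕ+, p i * GM M i with hEM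
  have h1 : ∀ᶠ n : ℕ in atTop, (∑ k ∈ Finset.range n, Xf (a k)) / n < CX + 1 :=
    tX.eventually (gt_mem_nhds (by linarith))
  have h2 : ∀ᶠ n : ℕ in atTop, EM - 1 < (∑ k ∈ Finset.range n, GM M (a k)) / n :=
    (tG M).eventually (lt_mem_nhds (by linarith))
  obtain ⟨N, hN⟩ := (h1.and h2).exists_forall_of_atTop
  refine ⟨N, fun n hn => ?_⟩
  rcases Nat.eq_zero_or_pos n with rfl | hnpos
  · simp
  · have hnR : (0:ℝ) < n := by exact_mod_cast hnpos
    obtain ⟨hXn, hGn⟩ := hN n hn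
    have hXsum' : (∑ k ∈ Finset.range n, Xf (a k)) < (CX + 1) * n := by
      rw [div_lt_iff₀ hnR] at hXn; exact hXn
    have hGsum' : (EM - 1) * n < ∑ k ∈ Finset.range n, GM M (a k) := by
      rw [lt_div_iff₀ hnR] at hGn; exact hGn
    have hGMle : (∑ k ∈ Finset.range n, GM M (a k))
        ≤ ∑ k ∈ Finset.range n, Real.log (((a k : ℕ+):ℕ):ℝ) :=
      Finset.sum_le_sum fun k _ => min_le_left _ _
    have hGnonneg : (0:ℝ) ≤ ∑ k ∈ Finset.range n, Real.log (((a k : ℕ+):ℕ):ℝ) :=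
      Finset.sum_nonneg fun k _ => log_pnat_nonneg _
    have hLle : (∑ k ∈ Finset.range n, -Real.log (p (a k)))
        ≤ 2 * σ * (∑ k ∈ Finset.range n, Real.log (((a k : ℕ+):ℕ):ℝ))
          + ∑ k ∈ Finset.range n, Xf (a k) := by
      rw [Finset.mul_sum, ← Finset.sum_add_distrib]
      refine Finset.sum_le_sum fun k _ => ?_
      have := le_max_left (-Real.log (p (a k)) - 2 * σ * Real.log (((a k : ℕ+):ℕ):ℝ)) 0
      have hXk : -Real.log (p (a k)) - 2 * σ * Real.log (((a k : ℕ+):ℕ):ℝ) ≤ Xf (a k) := this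
      linarith
    -- chain : ΣX < (CX+1) n ≤ δ (EM-1) n < δ ΣGM ≤ δ ΣG
    have hchain : (∑ k ∈ Finset.range n, Xf (a k))
        ≤ δ * ∑ k ∈ Finset.range n, Real.log (((a k : ℕ+):ℕ):ℝ) := by
      have e1 : (CX + 1) * n ≤ δ * ((EM - 1) * n) := by
        have : (CX + 1) / δ ≤ EM - 1 := by linarith
        have h3 : (CX + 1) ≤ δ * (EM - 1) := by
          rw [div_le_iff₀ hδ] at this; linarith [this]
        nlinarith
      have e2 : δ * ((EM - 1) * n) ≤ δ * ∑ k ∈ Finset.range n, GM M (a k) :=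
        mul_le_mul_of_nonneg_left hGsum'.le hδ.le
      have e3 : δ * (∑ k ∈ Finset.range n, GM M (a k))
          ≤ δ * ∑ k ∈ Finset.range n, Real.log (((a k : ℕ+):ℕ):ℝ) :=
        mul_le_mul_of_nonneg_left hGMle hδ.le
      linarith
    have hfinal : 2 * σ + δ = 2 * (1/2 + η/2) := by
      rw [hσdef, hδdef]; ring
    calc (∑ k ∈ Finset.range n, -Real.log (p (a k)))
        ≤ 2 * σ * (∑ k ∈ Finset.range n, Real.log (((a k : ℕ+):ℕ):ℝ))
          + ∑ k ∈ Finset.range n, Xf (a k) := hLle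
      _ ≤ 2 * σ * (∑ k ∈ Finset.range n, Real.log (((a k : ℕ+):ℕ):ℝ))
          + δ * ∑ k ∈ Finset.range n, Real.log (((a k : ℕ+):ℕ):ℝ) := by linarith
      _ = (2 * σ + δ) * ∑ k ∈ Finset.range n, Real.log (((a k : ℕ+):ℕ):ℝ) := by ring
      _ = 2 * (1/2 + η/2) * ∑ k ∈ Finset.range n, Real.log (((a k : ℕ+):ℕ):ℝ) := by
          rw [hfinal]

end AS

section Covering
variable {p : ℕ+ → ℝ}

def GoodSet (p : ℕ+ → ℝ) (η : ℝ) (N : ℕ) : Set (ℕ → ℕ+) :=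
  {a | (∀ k, 0 < p (a k)) ∧ ∀ n ≥ N,
    (∑ k ∈ Finset.range n, -Real.log (p (a k)))
      ≤ 2 * (1/2 + η/2) * ∑ k ∈ Finset.range n, Real.log (((a k : ℕ+):ℕ):ℝ)}

lemma word_bound {t : ℝ} {n : ℕ} {a : ℕ → ℕ+}
    (hpos : ∀ k, 0 < p (a k))
    (hcon : (∑ k ∈ Finset.range n, -Real.log (p (a k)))
      ≤ 2 * t * ∑ k ∈ Finset.range n, Real.log (((a k : ℕ+):ℕ):ℝ)) :
    (∏ k ∈ Finset.range n, (((a k : ℕ+):ℕ):ℝ) ^ (-(2*t))) ≤ ∏ k ∈ Finset.range n, p (a k) := by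
  have hP1 : ∏ k ∈ Finset.range n, (((a k : ℕ+):ℕ):ℝ) ^ (-(2*t))
      = Real.exp (∑ k ∈ Finset.range n, (-(2*t)) * Real.log (((a k : ℕ+):ℕ):ℝ)) := by
    rw [Real.exp_sum]
    refine Finset.prod_congr rfl fun k _ => ?_
    have hx : (0:ℝ) < (((a k : ℕ+):ℕ):ℝ) := by
      have := one_le_pnat_real (a k); linarith
    rw [Real.rpow_def_of_pos hx]
    congr 1
    ring
  have hP2 : ∏ k ∈ Finset.range n, p (a k)
      = Real.exp (∑ k ∈ Finset.range n, Real.log (p (a k))) := by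
    rw [Real.exp_sum]
    exact Finset.prod_congr rfl fun k _ => (Real.exp_log (hpos k)).symm
  rw [hP1, hP2]
  apply Real.exp_le_exp.2
  have h1 : ∑ k ∈ Finset.range n, (-(2*t)) * Real.log (((a k : ℕ+):ℕ):ℝ)
      = -(2*t) * ∑ k ∈ Finset.range n, Real.log (((a k : ℕ+):ℕ):ℝ) := by
    rw [Finset.mul_sum]
  have h2 : ∑ k ∈ Finset.range n, -Real.log (p (a k))
      = -∑ k ∈ Finset.range n, Real.log (p (a k)) := by
    simp
  rw [h2] at hcon
  rw [h1]
  linarith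

def cylF (n : ℕ) (w : Fin n → ℕ+) : Set (ℕ → ℕ+) := {a | ∀ k : Fin n, a (k:ℕ) = w k}

lemma diam_image_cyl_le {n : ℕ} (w : Fin n → ℕ+) (S : Set (ℕ → ℕ+)) :
    EMetric.diam (cfVal '' (S ∩ cylF n w)) ≤
      ENNReal.ofReal (min (∏ k : Fin n, (((w k : ℕ+):ℕ):ℝ)⁻¹ ^ 2) (2 * (2:ℝ)⁻¹ ^ n)) := by
  apply EMetric.diam_le
  rintro x ⟨b, ⟨_, hbc⟩, rfl⟩ y ⟨c, ⟨_, hcc⟩, rfl⟩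
  have hagree : ∀ k, k < n → b k = c k := fun k hk => by
    rw [hbc ⟨k, hk⟩, hcc ⟨k, hk⟩]
  have hd := cfVal_dist_of_agree hagree
  rw [edist_dist, Real.dist_eq]
  apply ENNReal.ofReal_le_ofReal
  refine le_trans hd (min_le_min ?_ (le_refl _))
  rw [← Fin.prod_univ_eq_prod_range (fun k => (((b k : ℕ+):ℕ):ℝ)⁻¹ ^ 2) n]
  exact le_of_eq (Finset.prod_congr rfl fun k _ => by rw [hbc k])

lemma diam_image_cyl_le' {n : ℕ} (w : Fin n → ℕ+) (S : Set (ℕ → ℕ+)) :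
    EMetric.diam (cfVal '' (S ∩ cylF n w)) ≤ ENNReal.ofReal (2 * (2:ℝ)⁻¹ ^ n) :=
  le_trans (diam_image_cyl_le w S) (ENNReal.ofReal_le_ofReal (min_le_right _ _))

lemma tsum_word (hp : IsProbVec p) :
    ∀ n : ℕ, ∑' w : Fin n → ℕ+, ENNReal.ofReal (∏ k : Fin n, p (w k)) = 1 := by
  intro n
  induction n with
  | zero =>
    rw [tsum_eq_single (fun _ => 1) (fun w hw => absurd (Subsingleton.elim w _) hw)]
    simp
  | succ n ih =>
    rw [← Equiv.tsum_eq (Fin.consEquiv (fun _ : Fin (n+1) => ℕ+))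
      (fun v => ENNReal.ofReal (∏ k : Fin (n+1), p (v k)))]
    have hval : ∀ q : ℕ+ × (Fin n → ℕ+),
        ENNReal.ofReal (∏ k : Fin (n+1), p ((Fin.consEquiv (fun _ : Fin (n+1) => ℕ+) q) k))
          = ENNReal.ofReal (p q.1) * ENNReal.ofReal (∏ k : Fin n, p (q.2 k)) := by
      rintro ⟨i, v⟩
      have hprod : (∏ k : Fin (n+1), p ((Fin.consEquiv (fun _ : Fin (n+1) => ℕ+) (i, v)) k))
          = p i * ∏ k : Fin n, p (v k) := by
        have hcons : (Fin.consEquiv (fun _ : Fin (n+1) => ℕ+) (i, v)) = Fin.cons i v := rfl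
        rw [hcons, Fin.prod_univ_succ]
        simp [Fin.cons_succ]
      rw [hprod, ENNReal.ofReal_mul (hp.1 i)]
    rw [tsum_congr hval, ENNReal.tsum_prod']
    calc (∑' i : ℕ+, ∑' v : Fin n → ℕ+, ENNReal.ofReal (p i) * ENNReal.ofReal (∏ k : Fin n, p (v k)))
        = ∑' i : ℕ+, ENNReal.ofReal (p i) * ∑' v : Fin n → ℕ+, ENNReal.ofReal (∏ k : Fin n, p (v k)) := by
          exact tsum_congr fun i => ENNReal.tsum_mul_left
      _ = ∑' i : ℕ+, ENNReal.ofReal (p i) := by rw [ih]; simp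
      _ = 1 := tsum_ofReal_p hp

lemma level_bound (hp : IsProbVec p) {η : ℝ} (hη : 0 < η) {N n : ℕ} (hn : N ≤ n) :
    (∑' w : Fin n → ℕ+, EMetric.diam (cfVal '' (GoodSet p η N ∩ cylF n w)) ^ ((1:ℝ)/2 + η))
      ≤ ENNReal.ofReal ((2 * (2:ℝ)⁻¹ ^ n) ^ (η/2)) := by
  set s : ℝ := 1/2 + η with hs
  set t : ℝ := 1/2 + η/2 with htdef
  have hspos : 0 < s := by rw [hs]; linarith
  have htpos : 0 < t := by rw [htdef]; linarith
  have hst : s - t = η/2 := by rw [hs, htdef]; ring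
  have hgeo : (0:ℝ) < 2 * (2:ℝ)⁻¹ ^ n := by positivity
  have hbound : ∀ w : Fin n → ℕ+,
      EMetric.diam (cfVal '' (GoodSet p η N ∩ cylF n w)) ^ s
        ≤ ENNReal.ofReal (∏ k : Fin n, p (w k)) * ENNReal.ofReal ((2 * (2:ℝ)⁻¹ ^ n) ^ (η/2)) := by
    intro w
    rcases Set.eq_empty_or_nonempty (GoodSet p η N ∩ cylF n w) with he | ⟨a₀, ha₀G, ha₀c⟩
    · rw [he]
      rw [Set.image_empty, show EMetric.diam (∅ : Set ℝ) = 0 from Metric.ediam_empty, ENNReal.zero_rpow_of_pos hspos]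
      exact zero_le
    · set Pw : ℝ := ∏ k : Fin n, (((w k : ℕ+):ℕ):ℝ)⁻¹ ^ 2 with hPw
      set Dw : ℝ := min Pw (2 * (2:ℝ)⁻¹ ^ n) with hDw
      have hPwpos : 0 < Pw := by
        rw [hPw]
        apply Finset.prod_pos
        intro k _
        have := one_le_pnat_real (w k)
        positivity
      have hDpos : 0 < Dw := lt_min hPwpos hgeo
      have hdiam := diam_image_cyl_le w (GoodSet p η N)
      -- real estimate
      have hreal : Dw ^ s ≤ (∏ k : Fin n, p (w k)) * (2 * (2:ℝ)⁻¹ ^ n) ^ (η/2) := by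
        have hsplit : Dw ^ s = Dw ^ t * Dw ^ (s - t) := by
          rw [← Real.rpow_add hDpos]
          congr 1
          ring
        have h1 : Dw ^ t ≤ Pw ^ t :=
          Real.rpow_le_rpow hDpos.le (min_le_left _ _) htpos.le
        have h2 : Dw ^ (s - t) ≤ (2 * (2:ℝ)⁻¹ ^ n) ^ (s - t) :=
          Real.rpow_le_rpow hDpos.le (min_le_right _ _) (by rw [hst]; positivity)
        have hPt : Pw ^ t ≤ ∏ k : Fin n, p (w k) := by
          -- Pw ^ t = ∏ (w k) ^ (-(2t))
          have hPw2 : Pw = ∏ k : Fin n, (((w k : ℕ+):ℕ):ℝ) ^ (-2 : ℝ) := by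
            rw [hPw]
            refine Finset.prod_congr rfl fun k _ => ?_
            have hx : (0:ℝ) < (((w k : ℕ+):ℕ):ℝ) := by
              have := one_le_pnat_real (w k); linarith
            have h2n : (((w k : ℕ+):ℕ):ℝ) ^ (2:ℝ) = (((w k : ℕ+):ℕ):ℝ) ^ (2:ℕ) := by
              rw [← Real.rpow_natCast (((w k : ℕ+):ℕ):ℝ) 2]
              norm_num
            rw [Real.rpow_neg hx.le, h2n, inv_pow]
          have hPt1 : Pw ^ t = ∏ k : Fin n, (((w k : ℕ+):ℕ):ℝ) ^ (-(2*t)) := by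
            rw [hPw2, ← Real.finset_prod_rpow _ _ (fun k _ => by positivity) t]
            refine Finset.prod_congr rfl fun k _ => ?_
            have hx : (0:ℝ) ≤ (((w k : ℕ+):ℕ):ℝ) := by
              have := one_le_pnat_real (w k); linarith
            rw [← Real.rpow_mul hx]
            congr 1
            ring
          rw [hPt1]
          -- transfer to a₀ and use word_bound
          have ha₀w : ∀ k : Fin n, a₀ (k:ℕ) = w k := ha₀c
          have hcon := ha₀G.2 n hn
          have hwb := word_bound (t := t) ha₀G.1 hcon
          calc (∏ k : Fin n, (((w k : ℕ+):ℕ):ℝ) ^ (-(2*t)))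
              = ∏ k ∈ Finset.range n, (((a₀ k : ℕ+):ℕ):ℝ) ^ (-(2*t)) := by
                rw [← Fin.prod_univ_eq_prod_range (fun k => (((a₀ k : ℕ+):ℕ):ℝ) ^ (-(2*t))) n]
                exact Finset.prod_congr rfl fun k _ => by rw [ha₀w k]
            _ ≤ ∏ k ∈ Finset.range n, p (a₀ k) := hwb
            _ = ∏ k : Fin n, p (w k) := by
                rw [← Fin.prod_univ_eq_prod_range (fun k => p (a₀ k)) n]
                exact Finset.prod_congr rfl fun k _ => by rw [ha₀w k]
        calc Dw ^ s = Dw ^ t * Dw ^ (s - t) := hsplit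
          _ ≤ Pw ^ t * (2 * (2:ℝ)⁻¹ ^ n) ^ (s - t) := by
              apply mul_le_mul h1 h2 (Real.rpow_nonneg hDpos.le _) (Real.rpow_nonneg (by positivity) _)
          _ ≤ (∏ k : Fin n, p (w k)) * (2 * (2:ℝ)⁻¹ ^ n) ^ (η/2) := by
              rw [hst]
              apply mul_le_mul_of_nonneg_right hPt (Real.rpow_nonneg hgeo.le _)
      calc EMetric.diam (cfVal '' (GoodSet p η N ∩ cylF n w)) ^ s
          ≤ (ENNReal.ofReal Dw) ^ s := by
            exact ENNReal.rpow_le_rpow hdiam hspos.le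
        _ = ENNReal.ofReal (Dw ^ s) := ENNReal.ofReal_rpow_of_nonneg hDpos.le hspos.le
        _ ≤ ENNReal.ofReal ((∏ k : Fin n, p (w k)) * (2 * (2:ℝ)⁻¹ ^ n) ^ (η/2)) :=
            ENNReal.ofReal_le_ofReal hreal
        _ = ENNReal.ofReal (∏ k : Fin n, p (w k)) * ENNReal.ofReal ((2 * (2:ℝ)⁻¹ ^ n) ^ (η/2)) :=
            ENNReal.ofReal_mul (Finset.prod_nonneg fun k _ => hp.1 (w k))
  calc (∑' w : Fin n → ℕ+, EMetric.diam (cfVal '' (GoodSet p η N ∩ cylF n w)) ^ ((1:ℝ)/2 + η))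
      ≤ ∑' w : Fin n → ℕ+,
          ENNReal.ofReal (∏ k : Fin n, p (w k)) * ENNReal.ofReal ((2 * (2:ℝ)⁻¹ ^ n) ^ (η/2)) :=
        ENNReal.tsum_le_tsum fun w => hbound w
    _ = (∑' w : Fin n → ℕ+, ENNReal.ofReal (∏ k : Fin n, p (w k)))
          * ENNReal.ofReal ((2 * (2:ℝ)⁻¹ ^ n) ^ (η/2)) := ENNReal.tsum_mul_right
    _ = ENNReal.ofReal ((2 * (2:ℝ)⁻¹ ^ n) ^ (η/2)) := by rw [tsum_word hp]; simp

lemma dimH_image_good_le (hp : IsProbVec p) {η : ℝ} (hη : 0 < η) (N : ℕ) :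
    dimH (cfVal '' (GoodSet p η N)) ≤ ENNReal.ofReal (1/2 + η) := by
  have hs0 : (0:ℝ) ≤ 1/2 + η := by linarith
  have hμ : μH[(1/2 + η : ℝ)] (cfVal '' (GoodSet p η N)) = 0 := by
    have hcover : ∀ n : ℕ, cfVal '' (GoodSet p η N)
        ⊆ ⋃ w : Fin n → ℕ+, cfVal '' (GoodSet p η N ∩ cylF n w) := by
      intro n
      rintro x ⟨a, ha, rfl⟩
      exact mem_iUnion.2 ⟨fun k : Fin n => a k, ⟨a, ⟨ha, fun k => rfl⟩, rfl⟩⟩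
    have hr : Tendsto (fun n : ℕ => ENNReal.ofReal (2 * (2:ℝ)⁻¹ ^ n)) atTop (𝓝 0) := by
      rw [← ENNReal.ofReal_zero]
      apply ENNReal.tendsto_ofReal
      have h := tendsto_pow_atTop_nhds_zero_of_lt_one
        (by norm_num : (0:ℝ) ≤ 2⁻¹) (by norm_num : (2:ℝ)⁻¹ < 1)
      simpa using h.const_mul (2:ℝ)
    have hub := Measure.hausdorffMeasure_le_liminf_tsum (X := ℝ) (1/2 + η : ℝ)
      (cfVal '' (GoodSet p η N))
      (fun n => ENNReal.ofReal (2 * (2:ℝ)⁻¹ ^ n)) hr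
      (fun n w => cfVal '' (GoodSet p η N ∩ cylF n w))
      (Eventually.of_forall fun n w => diam_image_cyl_le' w _)
      (Eventually.of_forall hcover)
    have hBtend : Tendsto (fun n : ℕ => ENNReal.ofReal ((2 * (2:ℝ)⁻¹ ^ n) ^ (η/2)))
        atTop (𝓝 0) := by
      rw [← ENNReal.ofReal_zero]
      apply ENNReal.tendsto_ofReal
      have hq : (0:ℝ) ≤ (2:ℝ)⁻¹ ^ ((η:ℝ)/2) := Real.rpow_nonneg (by norm_num) _
      have hq1 : (2:ℝ)⁻¹ ^ ((η:ℝ)/2) < 1 :=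
        Real.rpow_lt_one (by norm_num) (by norm_num) (by linarith)
      have heq : ∀ n : ℕ, (2 * (2:ℝ)⁻¹ ^ n) ^ (η/2)
          = 2 ^ ((η:ℝ)/2) * ((2:ℝ)⁻¹ ^ ((η:ℝ)/2)) ^ n := by
        intro n
        rw [Real.mul_rpow (by norm_num) (by positivity)]
        congr 1
        rw [← Real.rpow_natCast ((2:ℝ)⁻¹) n, ← Real.rpow_mul (by norm_num : (0:ℝ) ≤ 2⁻¹),
          ← Real.rpow_natCast ((2:ℝ)⁻¹ ^ ((η:ℝ)/2)) n,
          ← Real.rpow_mul (by norm_num : (0:ℝ) ≤ 2⁻¹)]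
        congr 1
        ring
      have h := (tendsto_pow_atTop_nhds_zero_of_lt_one hq hq1).const_mul ((2:ℝ) ^ ((η:ℝ)/2))
      simp only [heq]
      simpa using h
    have hev : ∀ᶠ n : ℕ in atTop,
        (∑' w : Fin n → ℕ+,
          EMetric.diam (cfVal '' (GoodSet p η N ∩ cylF n w)) ^ ((1:ℝ)/2 + η))
          ≤ ENNReal.ofReal ((2 * (2:ℝ)⁻¹ ^ n) ^ (η/2)) :=
      eventually_atTop.2 ⟨N, fun n hn => level_bound hp hη hn⟩
    have hliminf : Filter.liminf (fun n : ℕ => ∑' w : Fin n → ℕ+,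
        EMetric.diam (cfVal '' (GoodSet p η N ∩ cylF n w)) ^ ((1:ℝ)/2 + η)) atTop ≤ 0 := by
      calc Filter.liminf (fun n : ℕ => ∑' w : Fin n → ℕ+,
            EMetric.diam (cfVal '' (GoodSet p η N ∩ cylF n w)) ^ ((1:ℝ)/2 + η)) atTop
          ≤ Filter.liminf (fun n : ℕ => ENNReal.ofReal ((2 * (2:ℝ)⁻¹ ^ n) ^ (η/2))) atTop :=
            Filter.liminf_le_liminf hev
        _ = 0 := hBtend.liminf_eq
    exact le_antisymm (le_trans hub (by simpa [EMetric.diam] using hliminf)) zero_le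
  set d : ℝ≥0 := ⟨1/2 + η, hs0⟩ with hd
  have hcoe : ((d : ℝ≥0) : ℝ) = 1/2 + η := rfl
  have hne : μH[((d : ℝ≥0) : ℝ)] (cfVal '' (GoodSet p η N)) ≠ ⊤ := by
    rw [hcoe, hμ]; exact ENNReal.zero_ne_top
  have hdim := dimH_le_of_hausdorffMeasure_ne_top hne
  refine le_trans hdim (le_of_eq ?_)
  rw [← ENNReal.ofReal_coe_nnreal, hcoe]

end Covering

end CFAux

/-- If the entropy `h(μ_p) = -∑ p_n log p_n` is infinite (equivalently, the series
`∑ p_n log p_n` is not summable), then `dim μ_p ≤ 1/2`. -/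
theorem dim_le_half_of_infinite_entropy
    (p : ℕ+ → ℝ) (m : Measure (ℕ → ℕ+))
    (hp : IsProbVec p) (hm : IsProbabilityMeasure m) (hb : IsBernoulli p m)
    (hent : ¬ Summable (fun n : ℕ+ => p n * Real.log (p n))) :
    dimMeasure (m.map cfVal) ≤ 1 / 2 := by
  apply ENNReal.le_of_forall_pos_le_add
  intro ε hε _
  have hη : (0:ℝ) < (ε:ℝ) := by exact_mod_cast hε
  set η : ℝ := (ε:ℝ) with hηdef
  set A : Set ℝ := ⋃ N : ℕ, cfVal '' (CFAux.GoodSet p η N) with hA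
  have hmeas : Measurable cfVal := CFAux.measurable_cfVal
  have hμA : (m.map cfVal) A = 1 := by
    have hub : (m.map cfVal) A ≤ 1 := by
      have h := measure_mono (μ := m.map cfVal) (Set.subset_univ A)
      rwa [Measure.map_apply hmeas MeasurableSet.univ, Set.preimage_univ, measure_univ] at h
    have hae := CFAux.ae_constraint hp hb hent hη
    have hsub : {a : ℕ → ℕ+ | (∀ k, 0 < p (a k)) ∧ ∃ N : ℕ, ∀ n ≥ N,
        (∑ k ∈ Finset.range n, -Real.log (p (a k)))
          ≤ 2 * (1/2 + η/2) * ∑ k ∈ Finset.range n, Real.log (((a k : ℕ+):ℕ):ℝ)}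
        ⊆ cfVal ⁻¹' A := by
      rintro a ⟨h1, N, h2⟩
      exact mem_preimage.2 (mem_iUnion.2 ⟨N, mem_image_of_mem _ ⟨h1, h2⟩⟩)
    have hnull : m ((cfVal ⁻¹' A)ᶜ) = 0 := by
      have h0 := ae_iff.1 hae
      refine measure_mono_null ?_ h0
      intro a ha
      exact fun hQ => ha (hsub hQ)
    have hlb : (1:ℝ≥0∞) ≤ m (cfVal ⁻¹' A) := by
      have h1 := measure_union_le (μ := m) (cfVal ⁻¹' A) ((cfVal ⁻¹' A)ᶜ)
      rw [Set.union_compl_self, measure_univ, hnull, add_zero] at h1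
      exact h1
    exact le_antisymm hub
      (le_trans hlb (Measure.le_map_apply hmeas.aemeasurable A))
  have hdimA : dimH A ≤ ENNReal.ofReal (1/2 + η) := by
    rw [hA, dimH_iUnion]
    exact iSup_le fun N => CFAux.dimH_image_good_le hp hη N
  have hstep : dimMeasure (m.map cfVal) ≤ dimH A := by
    exact iInf₂_le A hμA
  refine le_trans hstep (le_trans hdimA ?_)
  rw [ENNReal.ofReal_add (by norm_num) hη.le, ENNReal.ofReal_coe_nnreal]
  have hhalf : ENNReal.ofReal (1/2 : ℝ) ≤ (1/2 : ℝ≥0∞) := by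
    rw [ENNReal.ofReal_div_of_pos (by norm_num), ENNReal.ofReal_one, ENNReal.ofReal_ofNat]
  exact add_le_add hhalf (le_refl _)
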